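/- Null space of the network DtN map for q = 0. Assume q = 0, the graph G is connected, and the interior block (L_{γ,0})_{II} is invertible, and define Λ_{γ,0} = L_{BB} − L_{BI} L_{II}^{-1} L_{IB}. Then for f : B → ℝ one has Λ_{γ,0} f = 0 if and only if f is constant; that is, the null space of Λ_{γ,0} is one-dimensional and spanned by the all-ones vector 𝟙_B ∈ ℝ^B. -/

import Mathlib

open Matrix BigOperators

noncomputable def Lop {V : Type*} [Fintype V] (γ : V → V → ℝ) (q : V → ℝ)
    (u : V → ℝ) : V → ℝ :=
  fun i => (∑ j, γ i j * (u i - u j)) + q i * u i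

noncomputable def Lmat {V : Type*} [Fintype V] [DecidableEq V]
    (γ : V → V → ℝ) (q : V → ℝ) : Matrix V V ℝ :=
  Matrix.of fun i j => Lop γ q (Pi.single j 1) i

lemma lmat_mulVec {V : Type*} [Fintype V] [DecidableEq V] (γ : V → V → ℝ)
    (u : V → ℝ) (i : V) :
    (Lmat γ (0:V→ℝ)).mulVec u i = ∑ j, γ i j * (u i - u j) := by
  simp only [Matrix.mulVec, dotProduct, Lmat, Lop, Matrix.of_apply,
    Pi.zero_apply, zero_mul, add_zero, Pi.single_apply, Finset.sum_mul, sub_mul]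
  rw [Finset.sum_comm]
  refine Finset.sum_congr rfl fun j _ => ?_
  simp [mul_sub, sub_mul, Finset.sum_sub_distrib, ite_mul, mul_ite]

lemma quad_form {V : Type*} [Fintype V] [DecidableEq V] (γ : V → V → ℝ)
    (hsymm : ∀ i j, γ i j = γ j i) (u : V → ℝ) :
    ∑ i, ∑ j, γ i j * (u i - u j)^2
      = 2 * ∑ i, u i * ((Lmat γ (0:V→ℝ)).mulVec u i) := by
  have swap : ∑ i, ∑ j, γ i j * (u i - u j) * u j
      = - ∑ i, ∑ j, γ i j * (u i - u j) * u i := by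
    rw [Finset.sum_comm, ← Finset.sum_neg_distrib]
    refine Finset.sum_congr rfl fun i _ => ?_
    rw [← Finset.sum_neg_distrib]
    refine Finset.sum_congr rfl fun j _ => ?_
    rw [hsymm j i]; ring
  have expand : ∀ i j, γ i j * (u i - u j)^2
      = γ i j * (u i - u j) * u i - γ i j * (u i - u j) * u j := by
    intro i j; ring
  simp_rw [expand, Finset.sum_sub_distrib]
  rw [swap]
  simp_rw [lmat_mulVec, Finset.mul_sum]
  have : ∀ i j, u i * (γ i j * (u i - u j)) = γ i j * (u i - u j) * u i := by
    intro i j; ring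
  simp_rw [this, two_mul, Finset.sum_add_distrib]
  rw [sub_neg_eq_add]

lemma const_of_adj_eq {V : Type*} (G : SimpleGraph V) (hconn : G.Connected)
    (u : V → ℝ) (h : ∀ i j, G.Adj i j → u i = u j) : ∀ i j, u i = u j := by
  intro i j
  obtain ⟨w⟩ := hconn.preconnected i j
  induction w with
  | nil => rfl
  | cons h' p ih => exact (h _ _ h').trans ih

theorem dtn_nullspace_constants
    {V : Type*} [Fintype V] [DecidableEq V]
    (G : SimpleGraph V) [DecidableRel G.Adj]
    (γ : V → V → ℝ) (hsymm : ∀ i j, γ i j = γ j i)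
    (hpos : ∀ i j, G.Adj i j → 0 < γ i j)
    (hzero : ∀ i j, ¬ G.Adj i j → γ i j = 0)
    (hconn : G.Connected)
    (B : Finset V) (hB : B.Nonempty) (hI : (Bᶜ : Finset V).Nonempty)
    (LBB : Matrix ↥B ↥B ℝ) (LBI : Matrix ↥B ↥(Bᶜ) ℝ)
    (LIB : Matrix ↥(Bᶜ) ↥B ℝ) (LII : Matrix ↥(Bᶜ) ↥(Bᶜ) ℝ)
    (hLBB : LBB = (Lmat γ (0 : V → ℝ)).submatrix (fun i : ↥B => (i : V)) (fun j : ↥B => (j : V)))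
    (hLBI : LBI = (Lmat γ (0 : V → ℝ)).submatrix (fun i : ↥B => (i : V)) (fun j : ↥(Bᶜ) => (j : V)))
    (hLIB : LIB = (Lmat γ (0 : V → ℝ)).submatrix (fun i : ↥(Bᶜ) => (i : V)) (fun j : ↥B => (j : V)))
    (hLII : LII = (Lmat γ (0 : V → ℝ)).submatrix (fun i : ↥(Bᶜ) => (i : V)) (fun j : ↥(Bᶜ) => (j : V)))
    (hinv : IsUnit LII.det) :
    ∀ f : ↥B → ℝ, (LBB - LBI * LII⁻¹ * LIB).mulVec f = 0 ↔ ∃ c : ℝ, ∀ j, f j = c := by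
  intro f
  set L : Matrix V V ℝ := Lmat γ (0 : V → ℝ) with hL
  set g : ↥(Bᶜ:Finset V) → ℝ := -(LII⁻¹.mulVec (LIB.mulVec f)) with hg
  set u : V → ℝ := fun v =>
    if h : v ∈ B then f ⟨v, h⟩ else g ⟨v, Finset.mem_compl.mpr h⟩ with hu
  have huB : ∀ j : ↥B, u (j : V) = f j := by
    intro j; rw [hu]; simp [j.2]
  have huI : ∀ j : ↥(Bᶜ:Finset V), u (j : V) = g j := by
    intro j
    have hj : (j:V) ∉ B := Finset.mem_compl.mp j.2
    rw [hu]; simp [hj]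
  -- splitting a mulVec over the partition
  have split : ∀ (i : V),
      L.mulVec u i = (∑ j : ↥B, L i j * f j) + ∑ j : ↥(Bᶜ:Finset V), L i j * g j := by
    intro i
    simp only [Matrix.mulVec, dotProduct]
    rw [← Finset.sum_add_sum_compl B (fun j => L i j * u j),
      ← Finset.sum_coe_sort B (fun j => L i j * u j),
      ← Finset.sum_coe_sort (Bᶜ) (fun j => L i j * u j)]
    congr 1
    · exact Finset.sum_congr rfl fun j _ => by rw [huB]
    · exact Finset.sum_congr rfl fun j _ => by rw [huI]
  -- interior equation
  have hMg : LII.mulVec g = -(LIB.mulVec f) := by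
    rw [hg, Matrix.mulVec_neg, Matrix.mulVec_mulVec, Matrix.mul_nonsing_inv _ hinv,
      Matrix.one_mulVec]
  have hint : ∀ i : ↥(Bᶜ:Finset V), L.mulVec u (i : V) = 0 := by
    intro i
    rw [split]
    have h1 : (∑ j : ↥B, L i j * f j) = LIB.mulVec f i := by
      rw [hLIB]; simp [Matrix.mulVec, dotProduct, Matrix.submatrix_apply]
    have h2 : (∑ j : ↥(Bᶜ:Finset V), L i j * g j) = LII.mulVec g i := by
      rw [hLII]; simp [Matrix.mulVec, dotProduct, Matrix.submatrix_apply]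
    rw [h1, h2, hMg]; simp
  -- boundary equation
  have hbd : ∀ i : ↥B, L.mulVec u (i : V) = (LBB - LBI * LII⁻¹ * LIB).mulVec f i := by
    intro i
    rw [split]
    have h1 : (∑ j : ↥B, L i j * f j) = LBB.mulVec f i := by
      rw [hLBB]; simp [Matrix.mulVec, dotProduct, Matrix.submatrix_apply]
    have h2 : (∑ j : ↥(Bᶜ:Finset V), L i j * g j) = LBI.mulVec g i := by
      rw [hLBI]; simp [Matrix.mulVec, dotProduct, Matrix.submatrix_apply]
    rw [h1, h2, Matrix.sub_mulVec]
    have h3 : (LBI * LII⁻¹ * LIB).mulVec f = -(LBI.mulVec g) := by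
      rw [hg, Matrix.mulVec_neg, neg_neg, ← Matrix.mulVec_mulVec, ← Matrix.mulVec_mulVec]
    rw [h3]
    simp [sub_neg_eq_add]
  constructor
  · intro h0
    have hLu : L.mulVec u = 0 := by
      funext v
      by_cases hv : v ∈ B
      · have := hbd ⟨v, hv⟩
        simp only [this, h0, Pi.zero_apply]
      · exact hint ⟨v, Finset.mem_compl.mpr hv⟩
    have hQ : ∑ i, ∑ j, γ i j * (u i - u j)^2 = 0 := by
      rw [quad_form γ hsymm u]
      have : ∀ i, u i * (L.mulVec u i) = 0 := fun i => by rw [hLu]; simp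
      simp [← hL, hLu]
    have hnn : ∀ i j, 0 ≤ γ i j := by
      intro i j
      by_cases h : G.Adj i j
      · exact (hpos i j h).le
      · rw [hzero i j h]
    have hterm : ∀ i j, γ i j * (u i - u j)^2 = 0 := by
      intro i j
      have h1 := (Finset.sum_eq_zero_iff_of_nonneg
        (fun i _ => Finset.sum_nonneg fun j _ =>
          mul_nonneg (hnn i j) (sq_nonneg _))).mp hQ i (Finset.mem_univ i)
      exact (Finset.sum_eq_zero_iff_of_nonneg
        (fun j _ => mul_nonneg (hnn i j) (sq_nonneg _))).mp h1 j (Finset.mem_univ j)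
    have hadj : ∀ i j, G.Adj i j → u i = u j := by
      intro i j hij
      have := hterm i j
      have hsq : (u i - u j)^2 = 0 := by
        rcases mul_eq_zero.mp this with h | h
        · exact absurd h (hpos i j hij).ne'
        · exact h
      have := pow_eq_zero_iff (n := 2) (by norm_num) |>.mp hsq
      linarith [sub_eq_zero.mp this]
    have hcst := const_of_adj_eq G hconn u hadj
    obtain ⟨b, hb⟩ := hB
    refine ⟨f ⟨b, hb⟩, fun j => ?_⟩
    rw [← huB j, ← huB ⟨b, hb⟩]
    exact hcst _ _
  · rintro ⟨c, hc⟩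
    -- constant vector is in the kernel of L
    have hconst : L.mulVec (fun _ => c) = 0 := by
      funext i
      rw [hL, lmat_mulVec]
      simp
    -- f is the constant c on B
    have hf : f = fun _ => c := funext hc
    -- g is the constant c on I
    have hgc : g = fun _ => c := by
      have hsplit := split
      have h1 : ∀ i : ↥(Bᶜ:Finset V),
          LIB.mulVec f i + LII.mulVec (fun _ => c) i = 0 := by
        intro i
        have := congrFun hconst (i : V)
        rw [Matrix.mulVec, ] at this
        have e : L.mulVec (fun _ => c) (i:V)
            = (∑ j : ↥B, L i j * c) + ∑ j : ↥(Bᶜ:Finset V), L i j * c := by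
          simp only [Matrix.mulVec, dotProduct]
          rw [← Finset.sum_add_sum_compl B (fun j => L (i:V) j * c),
            ← Finset.sum_coe_sort B (fun j => L (i:V) j * c),
            ← Finset.sum_coe_sort (Bᶜ) (fun j => L (i:V) j * c)]
        have e1 : (∑ j : ↥B, L i j * c) = LIB.mulVec f i := by
          rw [hLIB, hf]; simp [Matrix.mulVec, dotProduct, Matrix.submatrix_apply]
        have e2 : (∑ j : ↥(Bᶜ:Finset V), L i j * c) = LII.mulVec (fun _ => c) i := by
          rw [hLII]; simp [Matrix.mulVec, dotProduct, Matrix.submatrix_apply]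
        rw [← e1, ← e2, ← e]
        exact this
      have h2 : LII.mulVec (fun _ => c) = -(LIB.mulVec f) := by
        funext i
        have := h1 i
        simp only [Pi.neg_apply]
        linarith [this]
      have h3 : LIB.mulVec f = -(LII.mulVec (fun _ => c)) := by rw [h2, neg_neg]
      rw [hg, h3, Matrix.mulVec_neg, neg_neg, Matrix.mulVec_mulVec,
        Matrix.nonsing_inv_mul _ hinv, Matrix.one_mulVec]
    have huc : u = fun _ => c := by
      funext v
      by_cases hv : v ∈ B
      · rw [hu]; simp [hv, hc]
      · rw [hu]; simp [hv, hgc]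
    funext i
    rw [Pi.zero_apply, ← hbd i, huc, hconst]
    rfl
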